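/- The weighted adjacency matrix A of L_N(q) satisfies A y^{↓↓} = ((q^{dim y} - q^{N - dim y})/(q-1)) y^{↓↓} + Σ_{z covers y} z^{↓↓} for every subspace y. -/

import Mathlib

open scoped Classical
open Module

section aux

variable {F : Type*} [Field F] [Fintype F]

lemma aux_mul (a b : ℕ) (hb : 1 ≤ b) : a * (b - 1) + a = a * b := by
  cases b with
  | zero => omega
  | succ n => simp [Nat.mul_succ]

lemma aux_card_mem {V : Type*} [AddCommGroup V] [Module F V] [Fintype V]
    (z : Submodule F V) :
    (Finset.univ.filter (fun v : V => v ∈ z)).card = Fintype.card F ^ finrank F z := by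
  rw [← Fintype.card_subtype]
  exact card_eq_pow_finrank

variable {V : Type*} [AddCommGroup V] [Module F V] [FiniteDimensional F V]
    [Fintype V] [Fintype (Submodule F V)]

lemma aux_finrank_sup (x : Submodule F V) (v : V) (hv : v ∉ x) :
    finrank F ↥(x ⊔ (F ∙ v)) = finrank F x + 1 := by
  have hv0 : v ≠ 0 := fun h => hv (h ▸ x.zero_mem)
  have hinf : x ⊓ (F ∙ v) = ⊥ := by
    rw [eq_bot_iff]
    rintro w hw
    rw [Submodule.mem_inf] at hw
    obtain ⟨hwx, hws⟩ := hw
    obtain ⟨c, rfl⟩ := Submodule.mem_span_singleton.1 hws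
    rcases eq_or_ne c 0 with rfl | hc
    · simp
    · exact absurd (by simpa [smul_smul, inv_mul_cancel₀ hc] using x.smul_mem c⁻¹ hwx) hv
  have h := Submodule.finrank_sup_add_finrank_inf_eq x (F ∙ v)
  rw [hinf, finrank_bot, finrank_span_singleton hv0] at h
  omega

lemma aux_covers (x y : Submodule F V) (hxy : x ≤ y) :
    (Fintype.card F - 1) * (Finset.univ.filter (fun z : Submodule F V =>
      x ≤ z ∧ z ≤ y ∧ finrank F z = finrank F x + 1)).card + 1
      = Fintype.card F ^ (finrank F y - finrank F x) := by
  set q := Fintype.card F with hqdef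
  have hq : 1 ≤ q := Fintype.card_pos
  set dx := finrank F x with hdx
  have hdxy : dx ≤ finrank F y := Submodule.finrank_mono hxy
  set t := Finset.univ.filter (fun z : Submodule F V =>
      x ≤ z ∧ z ≤ y ∧ finrank F z = dx + 1) with ht
  set s := Finset.univ.filter (fun v : V => v ∈ y ∧ v ∉ x) with hs
  have hcards : ∀ z : Submodule F V, x ≤ z →
      (Finset.univ.filter (fun v : V => v ∈ z ∧ v ∉ x)).card + q ^ dx = q ^ finrank F z := by
    intro z hxz
    have hsd : Finset.univ.filter (fun v : V => v ∈ z ∧ v ∉ x)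
        = (Finset.univ.filter (fun v : V => v ∈ z)) \ (Finset.univ.filter (fun v : V => v ∈ x)) := by
      ext v
      simp only [Finset.mem_filter, Finset.mem_univ, true_and, Finset.mem_sdiff]
    have hsub : (Finset.univ.filter (fun v : V => v ∈ x))
        ⊆ (Finset.univ.filter (fun v : V => v ∈ z)) := by
      intro v hv; simp at hv ⊢; exact hxz hv
    rw [hsd, Finset.card_sdiff_of_subset hsub, aux_card_mem, aux_card_mem]
    first
    | rfl
    | exact Nat.sub_add_cancel (Nat.pow_le_pow_right hq (Submodule.finrank_mono hxz))
  have hmem : ∀ v ∈ s, (x ⊔ (F ∙ v)) ∈ t := by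
    intro v hv
    rw [hs, Finset.mem_filter] at hv
    obtain ⟨-, hvy, hvx⟩ := hv
    rw [ht, Finset.mem_filter]
    exact ⟨Finset.mem_univ _, le_sup_left,
      sup_le hxy ((Submodule.span_singleton_le_iff_mem v y).2 hvy),
      aux_finrank_sup x v hvx⟩
  have hfib : ∀ z ∈ t, (s.filter (fun v => x ⊔ (F ∙ v) = z)).card + q ^ dx = q ^ (dx + 1) := by
    intro z hz
    rw [ht, Finset.mem_filter] at hz
    obtain ⟨-, hxz, hzy, hdz⟩ := hz
    have hfe : s.filter (fun v => x ⊔ (F ∙ v) = z)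
        = Finset.univ.filter (fun v : V => v ∈ z ∧ v ∉ x) := by
      ext v
      rw [Finset.mem_filter, hs, Finset.mem_filter, Finset.mem_filter]
      constructor
      · rintro ⟨⟨-, hvy, hvx⟩, rfl⟩
        exact ⟨Finset.mem_univ _, Submodule.mem_sup_right (Submodule.mem_span_singleton_self v), hvx⟩
      · rintro ⟨-, hvz, hvx⟩
        have hle : x ⊔ (F ∙ v) ≤ z :=
          sup_le hxz ((Submodule.span_singleton_le_iff_mem v z).2 hvz)
        have heq : x ⊔ (F ∙ v) = z := by
          apply Submodule.eq_of_le_of_finrank_le hle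
          rw [hdz, aux_finrank_sup x v hvx]
        exact ⟨⟨Finset.mem_univ _, hzy hvz, hvx⟩, heq⟩
    rw [hfe, hcards z hxz, hdz]
  have h2 : q ^ dx * (q - 1) + q ^ dx = q ^ (dx + 1) := by
    rw [pow_succ]; exact aux_mul _ _ hq
  have hfib' : ∀ z ∈ t, (s.filter (fun v => x ⊔ (F ∙ v) = z)).card = q ^ dx * (q - 1) :=
    fun z hz => Nat.add_right_cancel ((hfib z hz).trans h2.symm)
  have hsum : s.card = t.card * (q ^ dx * (q - 1)) := by
    calc s.card = ∑ z ∈ t, (s.filter (fun v => x ⊔ (F ∙ v) = z)).card :=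
          Finset.card_eq_sum_card_fiberwise hmem
      _ = ∑ _z ∈ t, q ^ dx * (q - 1) := Finset.sum_congr rfl hfib'
      _ = t.card * (q ^ dx * (q - 1)) := by rw [Finset.sum_const, smul_eq_mul]
  have hcard_s : s.card + q ^ dx = q ^ finrank F y := hcards y hxy
  have hpow : q ^ dx * q ^ (finrank F y - dx) = q ^ finrank F y := by
    rw [← pow_add]; congr 1; omega
  have hpos : 0 < q ^ dx := Nat.pow_pos hq
  apply Nat.eq_of_mul_eq_mul_left hpos
  calc q ^ dx * ((q - 1) * t.card + 1)
      = t.card * (q ^ dx * (q - 1)) + q ^ dx := by ring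
    _ = q ^ finrank F y := by rw [← hsum]; exact hcard_s
    _ = q ^ dx * q ^ (finrank F y - dx) := hpow.symm

lemma aux_hyps (x : Submodule F V) :
    (Fintype.card F - 1) * (Finset.univ.filter (fun z : Submodule F V =>
      z ≤ x ∧ finrank F x = finrank F z + 1)).card + 1
      = Fintype.card F ^ finrank F x := by
  haveI : Finite (Dual F ↥x) := Module.finite_of_finite F
  haveI : Fintype (Dual F ↥x) := Fintype.ofFinite _
  set q := Fintype.card F with hqdef
  have hq : 1 ≤ q := Fintype.card_pos
  set d := finrank F ↥x with hd
  set t := Finset.univ.filter (fun z : Submodule F V =>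
      z ≤ x ∧ finrank F x = finrank F z + 1) with ht
  set s := Finset.univ.filter (fun φ : Dual F ↥x => φ ≠ 0) with hs
  have hcard_s : s.card + 1 = q ^ d := by
    have h0 : s = Finset.univ \ {(0 : Dual F ↥x)} := by
      ext φ; simp [hs]
    rw [h0, Finset.card_sdiff_of_subset (by simp), Finset.card_singleton, Finset.card_univ]
    have hc : Fintype.card (Dual F ↥x) = q ^ d := by
      rw [card_eq_pow_finrank (K := F), Subspace.dual_finrank_eq]
    rw [hc]
    have : 1 ≤ q ^ d := Nat.one_le_pow _ _ hq
    omega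
  have hker : ∀ φ : Dual F ↥x, φ ≠ 0 → finrank F (LinearMap.ker φ) + 1 = d := by
    intro φ hφ
    obtain ⟨v, hv⟩ := DFunLike.ne_iff.1 hφ
    simp only [LinearMap.zero_apply] at hv
    have hrange : LinearMap.range φ = ⊤ := by
      rw [eq_top_iff]
      intro c _
      exact ⟨(c * (φ v)⁻¹) • v, by simp [mul_assoc, inv_mul_cancel₀ hv]⟩
    have h1 := LinearMap.finrank_range_add_finrank_ker φ
    rw [hrange, finrank_top, finrank_self] at h1
    omega
  have hmem : ∀ φ ∈ s, (LinearMap.ker φ).map x.subtype ∈ t := by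
    intro φ hφ
    rw [hs, Finset.mem_filter] at hφ
    rw [ht, Finset.mem_filter]
    refine ⟨Finset.mem_univ _, Submodule.map_subtype_le _ _, ?_⟩
    rw [Submodule.finrank_map_subtype_eq]
    exact (hker φ hφ.2).symm
  have hfib : ∀ z ∈ t, (s.filter (fun φ => (LinearMap.ker φ).map x.subtype = z)).card + 1 = q := by
    intro z hz
    rw [ht, Finset.mem_filter] at hz
    obtain ⟨-, hzx, hdz⟩ := hz
    set z' : Submodule F ↥x := z.comap x.subtype with hz'def
    have hmapz : z'.map x.subtype = z := by
      rw [hz'def, Submodule.map_comap_subtype, inf_eq_right.2 hzx]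
    have hz'rank : finrank F z' = finrank F z := by
      rw [← Submodule.finrank_map_subtype_eq x z', hmapz]
    have hfe : s.filter (fun φ => (LinearMap.ker φ).map x.subtype = z)
        = Finset.univ.filter (fun φ : Dual F ↥x => φ ∈ Submodule.dualAnnihilator z' ∧ φ ≠ 0) := by
      ext φ
      rw [Finset.mem_filter, hs, Finset.mem_filter, Finset.mem_filter]
      constructor
      · rintro ⟨⟨-, hφ⟩, hkz⟩
        have hker_eq : LinearMap.ker φ = z' := by
          have := congrArg (Submodule.comap x.subtype) hkz
          rwa [Submodule.comap_map_eq_of_injective (Submodule.injective_subtype x)] at this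
        refine ⟨Finset.mem_univ _, ?_, hφ⟩
        rw [Submodule.mem_dualAnnihilator]
        intro w hw
        rw [← hker_eq] at hw
        exact hw
      · rintro ⟨-, hφann, hφ⟩
        have hle : z' ≤ LinearMap.ker φ := by
          intro w hw
          rw [LinearMap.mem_ker]
          exact (Submodule.mem_dualAnnihilator φ).1 hφann w hw
        have hker_eq : z' = LinearMap.ker φ := by
          apply Submodule.eq_of_le_of_finrank_le hle
          have := hker φ hφ
          omega
        refine ⟨⟨Finset.mem_univ _, hφ⟩, ?_⟩
        rw [← hker_eq, hmapz]
    have hann : finrank F (Submodule.dualAnnihilator z') = 1 := by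
      have h1 := Submodule.finrank_quotient_add_finrank z'
      have h2 : finrank F (↥x ⧸ z') = finrank F (Submodule.dualAnnihilator z') :=
        LinearEquiv.finrank_eq (Subspace.quotEquivAnnihilator z')
      have h3 : finrank F z' + 1 = d := by omega
      omega
    have hsd : Finset.univ.filter (fun φ : Dual F ↥x => φ ∈ Submodule.dualAnnihilator z' ∧ φ ≠ 0)
        = (Finset.univ.filter (fun φ : Dual F ↥x => φ ∈ Submodule.dualAnnihilator z')) \ {0} := by
      ext φ
      simp only [Finset.mem_filter, Finset.mem_univ, true_and, Finset.mem_sdiff,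
        Finset.mem_singleton]
    have hsub : ({0} : Finset (Dual F ↥x))
        ⊆ Finset.univ.filter (fun φ : Dual F ↥x => φ ∈ Submodule.dualAnnihilator z') := by
      simp [Submodule.zero_mem]
    rw [hfe, hsd, Finset.card_sdiff_of_subset hsub, Finset.card_singleton, aux_card_mem, hann, pow_one]
    omega
  have hfib' : ∀ z ∈ t, (s.filter (fun φ => (LinearMap.ker φ).map x.subtype = z)).card = q - 1 :=
    fun z hz => by have := hfib z hz; omega
  have hsum : s.card = t.card * (q - 1) := by
    calc s.card = ∑ z ∈ t, (s.filter (fun φ => (LinearMap.ker φ).map x.subtype = z)).card :=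
          Finset.card_eq_sum_card_fiberwise hmem
      _ = ∑ _z ∈ t, (q - 1) := Finset.sum_congr rfl hfib'
      _ = t.card * (q - 1) := by rw [Finset.sum_const, smul_eq_mul]
  have : t.card * (q - 1) + 1 = q ^ d := by rw [← hsum]; exact hcard_s
  rw [mul_comm] at this
  exact this

end aux

theorem stmt_9 (q N : ℕ) (F : Type*) [Field F] [Fintype F] (hF : Fintype.card F = q)
    (V : Type*) [AddCommGroup V] [Module F V] [FiniteDimensional F V]
    (hV : finrank F V = N) [Fintype (Submodule F V)]
    (A : Matrix (Submodule F V) (Submodule F V) ℝ)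
    (hA : ∀ y z : Submodule F V, A y z =
      if z ≤ y ∧ finrank F y = finrank F z + 1 then 1
      else if y ≤ z ∧ finrank F z = finrank F y + 1 then (q : ℝ) ^ finrank F y
      else 0)
    (dd : Submodule F V → (Submodule F V → ℝ))
    (hdd : ∀ y z : Submodule F V, dd y z = if z ≤ y then 1 else 0) :
    ∀ y : Submodule F V, A.mulVec (dd y) =
      (((q : ℝ) ^ finrank F y - (q : ℝ) ^ (N - finrank F y)) / ((q : ℝ) - 1)) • dd y +
      ∑ z ∈ Finset.univ.filter (fun z : Submodule F V => y ≤ z ∧ finrank F z = finrank F y + 1), dd z := by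
  subst hF hV
  haveI : Finite V := Module.finite_of_finite F
  haveI : Fintype V := Fintype.ofFinite V
  have hq2 : 2 ≤ Fintype.card F := Fintype.one_lt_card
  have hq1 : (1 : ℕ) ≤ Fintype.card F := by omega
  have hq1R : (Fintype.card F : ℝ) - 1 ≠ 0 := by
    have : (2 : ℝ) ≤ (Fintype.card F : ℝ) := by exact_mod_cast hq2
    intro h; linarith
  intro y
  funext x
  have hsplit : ∀ z : Submodule F V, A x z * dd y z =
      (if z ≤ x ∧ finrank F x = finrank F z + 1 ∧ z ≤ y then (1:ℝ) else 0)
    + (if x ≤ z ∧ finrank F z = finrank F x + 1 ∧ z ≤ y then ((Fintype.card F : ℝ)) ^ finrank F x else 0) := by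
    intro z
    rw [hA, hdd]
    by_cases h1 : z ≤ x ∧ finrank F x = finrank F z + 1
    · obtain ⟨h1a, h1b⟩ := h1
      rw [if_pos ⟨h1a, h1b⟩]
      by_cases hy : z ≤ y
      · rw [if_pos hy, if_pos ⟨h1a, h1b, hy⟩, if_neg, mul_one]
        · ring
        · rintro ⟨-, hd, -⟩; omega
      · rw [if_neg hy, mul_zero, if_neg (fun h => hy h.2.2), if_neg (fun h => hy h.2.2)]
        ring
    · rw [if_neg h1]
      by_cases h2 : x ≤ z ∧ finrank F z = finrank F x + 1
      · obtain ⟨h2a, h2b⟩ := h2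
        rw [if_pos ⟨h2a, h2b⟩]
        by_cases hy : z ≤ y
        · rw [if_pos hy, if_neg (fun h => h1 ⟨h.1, h.2.1⟩), if_pos ⟨h2a, h2b, hy⟩, mul_one]
          ring
        · rw [if_neg hy, mul_zero, if_neg (fun h => hy h.2.2), if_neg (fun h => hy h.2.2)]
          ring
      · rw [if_neg h2, zero_mul, if_neg (fun h => h1 ⟨h.1, h.2.1⟩), if_neg (fun h => h2 ⟨h.1, h.2.1⟩)]
        ring
  have hLHS : (A.mulVec (dd y)) x
      = ((Finset.univ.filter (fun z : Submodule F V =>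
          z ≤ x ∧ finrank F x = finrank F z + 1 ∧ z ≤ y)).card : ℝ)
      + (Fintype.card F : ℝ) ^ finrank F x *
        ((Finset.univ.filter (fun z : Submodule F V =>
          x ≤ z ∧ finrank F z = finrank F x + 1 ∧ z ≤ y)).card : ℝ) := by
    show ∑ z : Submodule F V, A x z * dd y z = _
    rw [Finset.sum_congr rfl (fun z _ => hsplit z), Finset.sum_add_distrib,
      ← Finset.sum_filter, ← Finset.sum_filter, Finset.sum_const, Finset.sum_const,
      nsmul_eq_mul, nsmul_eq_mul, mul_one, mul_comm]
  have hRHS : ((((Fintype.card F : ℝ) ^ finrank F y -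
        (Fintype.card F : ℝ) ^ (finrank F V - finrank F y)) /
        ((Fintype.card F : ℝ) - 1)) • dd y +
      ∑ z ∈ Finset.univ.filter (fun z : Submodule F V =>
        y ≤ z ∧ finrank F z = finrank F y + 1), dd z) x
      = (((Fintype.card F : ℝ) ^ finrank F y -
        (Fintype.card F : ℝ) ^ (finrank F V - finrank F y)) /
        ((Fintype.card F : ℝ) - 1)) * (if x ≤ y then (1:ℝ) else 0)
      + ((Finset.univ.filter (fun z : Submodule F V =>
          (y ≤ z ∧ finrank F z = finrank F y + 1) ∧ x ≤ z)).card : ℝ) := by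
    simp only [Pi.add_apply, Pi.smul_apply, smul_eq_mul, Finset.sum_apply]
    rw [hdd]
    congr 1
    rw [Finset.sum_congr rfl (fun z _ => hdd z x), Finset.sum_boole, Finset.filter_filter]
  rw [hLHS, hRHS]
  by_cases hxy : x ≤ y
  · -- x ≤ y case
    have hdxy : finrank F x ≤ finrank F y := Submodule.finrank_mono hxy
    have hdyN : finrank F y ≤ finrank F V := y.finrank_le
    have e1 := aux_hyps (F := F) x
    have e2 := aux_covers x y hxy
    have e3 := aux_covers y ⊤ le_top
    rw [finrank_top] at e3
    have hset1 : Finset.univ.filter (fun z : Submodule F V =>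
        z ≤ x ∧ finrank F x = finrank F z + 1 ∧ z ≤ y)
        = Finset.univ.filter (fun z : Submodule F V =>
        z ≤ x ∧ finrank F x = finrank F z + 1) := by
      ext z
      simp only [Finset.mem_filter, Finset.mem_univ, true_and]
      exact ⟨fun h => ⟨h.1, h.2.1⟩, fun h => ⟨h.1, h.2, h.1.trans hxy⟩⟩
    have hset2 : Finset.univ.filter (fun z : Submodule F V =>
        x ≤ z ∧ finrank F z = finrank F x + 1 ∧ z ≤ y)
        = Finset.univ.filter (fun z : Submodule F V =>
        x ≤ z ∧ z ≤ y ∧ finrank F z = finrank F x + 1) := by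
      ext z
      simp only [Finset.mem_filter, Finset.mem_univ, true_and]
      tauto
    have hset3 : Finset.univ.filter (fun z : Submodule F V =>
        (y ≤ z ∧ finrank F z = finrank F y + 1) ∧ x ≤ z)
        = Finset.univ.filter (fun z : Submodule F V =>
        y ≤ z ∧ z ≤ ⊤ ∧ finrank F z = finrank F y + 1) := by
      ext z
      simp only [Finset.mem_filter, Finset.mem_univ, true_and]
      exact ⟨fun h => ⟨h.1.1, le_top, h.1.2⟩, fun h => ⟨⟨h.1, h.2.2⟩, hxy.trans h.1⟩⟩
    rw [hset1, hset2, hset3, if_pos hxy, mul_one]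
    set H := (Finset.univ.filter (fun z : Submodule F V =>
        z ≤ x ∧ finrank F x = finrank F z + 1)).card
    set n2 := (Finset.univ.filter (fun z : Submodule F V =>
        x ≤ z ∧ z ≤ y ∧ finrank F z = finrank F x + 1)).card
    set n3 := (Finset.univ.filter (fun z : Submodule F V =>
        y ≤ z ∧ z ≤ ⊤ ∧ finrank F z = finrank F y + 1)).card
    have E1 : ((Fintype.card F : ℝ) - 1) * H + 1 = (Fintype.card F : ℝ) ^ finrank F x := by
      have := congrArg (Nat.cast : ℕ → ℝ) e1
      push_cast [Nat.cast_sub hq1] at this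
      linarith
    have E2 : ((Fintype.card F : ℝ) - 1) * n2 + 1
        = (Fintype.card F : ℝ) ^ (finrank F y - finrank F x) := by
      have := congrArg (Nat.cast : ℕ → ℝ) e2
      push_cast [Nat.cast_sub hq1] at this
      linarith
    have E3 : ((Fintype.card F : ℝ) - 1) * n3 + 1
        = (Fintype.card F : ℝ) ^ (finrank F V - finrank F y) := by
      have := congrArg (Nat.cast : ℕ → ℝ) e3
      push_cast [Nat.cast_sub hq1] at this
      linarith
    have HP : (Fintype.card F : ℝ) ^ finrank F x *
        (Fintype.card F : ℝ) ^ (finrank F y - finrank F x)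
        = (Fintype.card F : ℝ) ^ finrank F y := by
      rw [← pow_add]; congr 1; omega
    rw [div_add' _ _ _ hq1R, eq_div_iff hq1R]
    linear_combination E1 + (Fintype.card F : ℝ) ^ finrank F x * E2 - E3 + HP
  · -- ¬ x ≤ y case
    have hm := Submodule.finrank_sup_add_finrank_inf_eq x y
    have hlt1 : finrank F ↥(x ⊓ y) < finrank F x :=
      Submodule.finrank_lt_finrank_of_lt (inf_lt_left.2 hxy)
    have hlt2 : finrank F y < finrank F ↥(x ⊔ y) :=
      Submodule.finrank_lt_finrank_of_lt (right_lt_sup.2 hxy)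
    have hset1 : Finset.univ.filter (fun z : Submodule F V =>
        z ≤ x ∧ finrank F x = finrank F z + 1 ∧ z ≤ y)
        = if finrank F ↥(x ⊓ y) + 1 = finrank F x then {x ⊓ y} else ∅ := by
      split_ifs with hcase
      · ext z
        simp only [Finset.mem_filter, Finset.mem_univ, true_and, Finset.mem_singleton]
        constructor
        · rintro ⟨hzx, hdz, hzy⟩
          exact Submodule.eq_of_le_of_finrank_le (le_inf hzx hzy) (by omega)
        · rintro rfl
          exact ⟨inf_le_left, by omega, inf_le_right⟩
      · ext z
        simp only [Finset.mem_filter, Finset.mem_univ, true_and, Finset.notMem_empty,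
          iff_false, not_and]
        intro hzx hdz hzy
        have h := Submodule.finrank_mono (le_inf hzx hzy)
        omega
    have hset2 : Finset.univ.filter (fun z : Submodule F V =>
        x ≤ z ∧ finrank F z = finrank F x + 1 ∧ z ≤ y) = ∅ := by
      ext z
      simp only [Finset.mem_filter, Finset.mem_univ, true_and, Finset.notMem_empty,
        iff_false, not_and]
      intro hxz hdz hzy
      exact hxy (hxz.trans hzy)
    have hset3 : Finset.univ.filter (fun z : Submodule F V =>
        (y ≤ z ∧ finrank F z = finrank F y + 1) ∧ x ≤ z)
        = if finrank F ↥(x ⊔ y) = finrank F y + 1 then {x ⊔ y} else ∅ := by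
      split_ifs with hcase
      · ext z
        simp only [Finset.mem_filter, Finset.mem_univ, true_and, Finset.mem_singleton]
        constructor
        · rintro ⟨⟨hyz, hdz⟩, hxz⟩
          exact (Submodule.eq_of_le_of_finrank_le (sup_le hxz hyz) (by omega)).symm
        · rintro rfl
          exact ⟨⟨le_sup_right, hcase⟩, le_sup_left⟩
      · ext z
        simp only [Finset.mem_filter, Finset.mem_univ, true_and, Finset.notMem_empty,
          iff_false, not_and]
        rintro ⟨hyz, hdz⟩ hxz
        have h := Submodule.finrank_mono (sup_le hxz hyz)
        omega
    rw [hset1, hset2, hset3, if_neg hxy, mul_zero, Finset.card_empty]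
    by_cases hc : finrank F ↥(x ⊓ y) + 1 = finrank F x
    · have hc2 : finrank F ↥(x ⊔ y) = finrank F y + 1 := by omega
      rw [if_pos hc, if_pos hc2]
      norm_num
    · have hc2 : ¬ (finrank F ↥(x ⊔ y) = finrank F y + 1) := by omega
      rw [if_neg hc, if_neg hc2]
      norm_num
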